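/- (Split-kl inequality.) Let a < μ < b be real numbers, let Z_1, …, Z_N be i.i.d. random variables taking values in [a, b], and set Z_n^+ := max{0, Z_n − μ} and Z_n^- := max{0, μ − Z_n}, so that Z_n = μ + Z_n^+ − Z_n^-. Let p = E[Z_1], p^+ = E[Z_1^+], p^- = E[Z_1^-], and let p̂^+ = (1/N)·Σ_{n=1}^N Z_n^+ and p̂^- = (1/N)·Σ_{n=1}^N Z_n^- be the empirical means. Then for any δ ∈ (0,1), with probability at least 1 − δ, p ≤ μ + (b − μ)·kl^{-1,+}(p̂^+/(b − μ), ln(2/δ)/N) − (μ − a)·kl^{-1,−}(p̂^- /(μ − a), ln(2/δ)/N). -/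

import Mathlib

open MeasureTheory ProbabilityTheory

/-- The binary Kullback–Leibler divergence `kl(p‖q)`, with the conventions
`0 · ln 0 = 0` and `kl(p‖q) = +∞` whenever `q ∈ {0,1}` and `p ≠ q`. -/
noncomputable def klBin (p q : ℝ) : EReal :=
  if (q = 0 ∧ p ≠ 0) ∨ (q = 1 ∧ p ≠ 1) then ⊤
  else ((p * Real.log (p / q) + (1 - p) * Real.log ((1 - p) / (1 - q)) : ℝ) : EReal)

/-- The upper inverse `kl⁻¹⁺(p̂, ε) = max {p ∈ [0,1] : kl(p̂‖p) ≤ ε}`. -/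
noncomputable def klInvUp (phat : ℝ) (ε : EReal) : ℝ :=
  sSup {p : ℝ | p ∈ Set.Icc (0 : ℝ) 1 ∧ klBin phat p ≤ ε}

/-- The lower inverse `kl⁻¹⁻(p̂, ε) = min {p ∈ [0,1] : kl(p̂‖p) ≤ ε}`. -/
noncomputable def klInvLow (phat : ℝ) (ε : EReal) : ℝ :=
  sInf {p : ℝ | p ∈ Set.Icc (0 : ℝ) 1 ∧ klBin phat p ≤ ε}

/-- real-valued expanded kl -/
noncomputable def klR (p q : ℝ) : ℝ :=
  p * Real.log p - p * Real.log q + ((1 - p) * Real.log (1 - p) - (1 - p) * Real.log (1 - q))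

lemma klBin_self (p : ℝ) : klBin p p = 0 := by
  unfold klBin
  rw [if_neg (by tauto)]
  have h1 : p * Real.log (p / p) = 0 := by
    rcases eq_or_ne p 0 with h | h
    · simp [h]
    · rw [div_self h, Real.log_one, mul_zero]
  have h2 : (1 - p) * Real.log ((1 - p) / (1 - p)) = 0 := by
    rcases eq_or_ne (1 - p) 0 with h | h
    · simp [h]
    · rw [div_self h, Real.log_one, mul_zero]
  rw [h1, h2, add_zero]
  norm_num

lemma klBin_coe {p q : ℝ} (hp0 : 0 ≤ p) (hq0 : 0 < q) (hq1 : q < 1) :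
    klBin p q = ((klR p q : ℝ) : EReal) := by
  unfold klBin klR
  rw [if_neg (by push_neg; exact ⟨fun h => absurd h hq0.ne', fun h => absurd h hq1.ne⟩)]
  have e1 : p * Real.log (p / q) = p * Real.log p - p * Real.log q := by
    rcases eq_or_ne p 0 with h | h
    · simp [h]
    · rw [Real.log_div h hq0.ne', mul_sub]
  have e2 : (1 - p) * Real.log ((1 - p) / (1 - q)) =
      (1 - p) * Real.log (1 - p) - (1 - p) * Real.log (1 - q) := by
    rcases eq_or_ne (1 - p) 0 with h | h
    · simp [h]
    · rw [Real.log_div h (by linarith), mul_sub]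
  rw [e1, e2]

lemma klBin_reflect (p q : ℝ) : klBin (1 - p) (1 - q) = klBin p q := by
  unfold klBin
  have hc : ((1 - q = 0 ∧ 1 - p ≠ 0) ∨ (1 - q = 1 ∧ 1 - p ≠ 1)) ↔
      ((q = 0 ∧ p ≠ 0) ∨ (q = 1 ∧ p ≠ 1)) := by
    constructor
    · rintro (⟨h1, h2⟩ | ⟨h1, h2⟩)
      · exact Or.inr ⟨by linarith, fun h => h2 (by rw [h]; ring)⟩
      · exact Or.inl ⟨by linarith, fun h => h2 (by rw [h]; ring)⟩
    · rintro (⟨h1, h2⟩ | ⟨h1, h2⟩)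
      · exact Or.inr ⟨by rw [h1]; ring, fun h => h2 (by linarith)⟩
      · exact Or.inl ⟨by rw [h1]; ring, fun h => h2 (by linarith)⟩
  by_cases h : (q = 0 ∧ p ≠ 0) ∨ (q = 1 ∧ p ≠ 1)
  · rw [if_pos (hc.2 h), if_pos h]
  · rw [if_neg (fun hh => h (hc.1 hh)), if_neg h]
    have : (1 - p) * Real.log ((1 - p) / (1 - q)) +
        (1 - (1 - p)) * Real.log ((1 - (1 - p)) / (1 - (1 - q))) =
        p * Real.log (p / q) + (1 - p) * Real.log ((1 - p) / (1 - q)) := by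
      have e1 : (1:ℝ) - (1 - p) = p := by ring
      have e2 : (1:ℝ) - (1 - q) = q := by ring
      rw [e1, e2]; ring
    exact congrArg _ this

lemma klInvLow_reflect {phat : ℝ} {ε : EReal} (hp : phat ∈ Set.Icc (0:ℝ) 1) (hε : 0 ≤ ε) :
    klInvLow phat ε = 1 - klInvUp (1 - phat) ε := by
  set S := {p : ℝ | p ∈ Set.Icc (0:ℝ) 1 ∧ klBin (1 - phat) p ≤ ε} with hS
  have hSne : (1 - phat) ∈ S := ⟨⟨by linarith [hp.2], by linarith [hp.1]⟩,
    by rw [klBin_self]; exact hε⟩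
  have hbdd : BddAbove S := ⟨1, fun x hx => hx.1.2⟩
  have hT : {p : ℝ | p ∈ Set.Icc (0:ℝ) 1 ∧ klBin phat p ≤ ε} = (fun p => 1 - p) '' S := by
    ext p
    simp only [Set.mem_image, Set.mem_setOf_eq, Set.mem_Icc, hS]
    constructor
    · rintro ⟨⟨h0, h1⟩, hkl⟩
      refine ⟨1 - p, ⟨⟨by linarith, by linarith⟩, ?_⟩, by ring⟩
      rw [klBin_reflect]; exact hkl
    · rintro ⟨s, ⟨⟨h0, h1⟩, hkl⟩, rfl⟩
      refine ⟨⟨by linarith, by linarith⟩, ?_⟩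
      have := klBin_reflect phat (1 - s)
      rw [show (1:ℝ) - (1 - s) = s by ring] at this
      rw [← this]; exact hkl
  have hglb : IsGLB ((fun p => 1 - p) '' S) (1 - sSup S) := by
    constructor
    · rintro x ⟨s, hs, rfl⟩
      have : s ≤ sSup S := le_csSup hbdd hs
      show 1 - sSup S ≤ 1 - s
      linarith
    · intro y hy
      have : sSup S ≤ 1 - y := by
        refine csSup_le ⟨_, hSne⟩ (fun s hs => ?_)
        have : y ≤ 1 - s := hy ⟨s, hs, rfl⟩
        linarith
      linarith
  unfold klInvLow klInvUp
  rw [hT, hglb.csInf_eq (Set.Nonempty.image _ ⟨_, hSne⟩)]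

lemma klR_self (q : ℝ) : klR q q = 0 := by unfold klR; ring

lemma continuous_klR (q : ℝ) : Continuous fun p => klR p q := by
  have h1 : Continuous fun p : ℝ => p * Real.log p := by
    have := Real.continuous_negMulLog.neg
    convert this using 1; funext p; simp [Real.negMulLog]
  have h2 : Continuous fun p : ℝ => (1 - p) * Real.log (1 - p) :=
    h1.comp (continuous_const.sub continuous_id)
  unfold klR
  exact (h1.sub (continuous_id.mul continuous_const)).add
    (h2.sub ((continuous_const.sub continuous_id).mul continuous_const))

lemma klR_hasDeriv {q x : ℝ} (hx0 : 0 < x) (hx1 : x < 1) :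
    HasDerivAt (fun p => klR p q)
      (Real.log x - Real.log q - Real.log (1 - x) + Real.log (1 - q)) x := by
  have h1 : HasDerivAt (fun p : ℝ => p * Real.log p) (Real.log x + 1) x :=
    Real.hasDerivAt_mul_log hx0.ne'
  have h2 : HasDerivAt (fun p : ℝ => p * Real.log q) (Real.log q) x := by
    simpa using (hasDerivAt_id x).mul_const (Real.log q)
  have hin : HasDerivAt (fun p : ℝ => 1 - p) (-1) x := by
    simpa using (hasDerivAt_id x).const_sub 1
  have h3 : HasDerivAt (fun p : ℝ => (1 - p) * Real.log (1 - p))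
      ((Real.log (1 - x) + 1) * (-1)) x :=
    (Real.hasDerivAt_mul_log (by linarith : (1:ℝ) - x ≠ 0)).comp x hin
  have h4 : HasDerivAt (fun p : ℝ => (1 - p) * Real.log (1 - q))
      (-Real.log (1 - q)) x := by
    simpa using hin.mul_const (Real.log (1 - q))
  have := (h1.sub h2).add (h3.sub h4)
  refine this.congr_deriv ?_
  ring

lemma klR_anti {q : ℝ} (hq0 : 0 < q) (hq1 : q < 1) :
    AntitoneOn (fun p => klR p q) (Set.Icc 0 q) := by
  apply antitoneOn_of_deriv_nonpos (convex_Icc 0 q) (continuous_klR q).continuousOn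
  · rw [interior_Icc]
    intro x hx
    exact (klR_hasDeriv hx.1 (lt_trans hx.2 hq1)).differentiableAt.differentiableWithinAt
  · rw [interior_Icc]
    intro x hx
    rw [(klR_hasDeriv hx.1 (lt_trans hx.2 hq1)).deriv]
    have l1 : Real.log x ≤ Real.log q := Real.log_le_log hx.1 hx.2.le
    have l2 : Real.log (1 - q) ≤ Real.log (1 - x) :=
      Real.log_le_log (by linarith) (by linarith [hx.2])
    linarith

lemma integrable_of_bddR {Ω : Type*} [MeasurableSpace Ω] {P : Measure Ω} [IsFiniteMeasure P]
    {f : Ω → ℝ} (C : ℝ) (hf : Measurable f) (hC : ∀ ω, ‖f ω‖ ≤ C) : Integrable f P :=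
  ⟨hf.aestronglyMeasurable, HasFiniteIntegral.of_bounded (ae_of_all _ hC)⟩

lemma chernoff_low {Ω : Type*} [MeasurableSpace Ω] (P : Measure Ω) [IsProbabilityMeasure P]
    (N : ℕ) (X : Fin N → Ω → ℝ) (hmeas : ∀ n, Measurable (X n))
    (hrange : ∀ n ω, X n ω ∈ Set.Icc (0:ℝ) 1)
    (hindep : iIndepFun X P)
    (i0 : Fin N) (hident : ∀ n, IdentDistrib (X n) (X i0) P P)
    (t : ℝ) (ht0 : 0 < t) (htq : t < P[X i0]) (hq1 : P[X i0] < 1) :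
    P {ω | ∑ n, X n ω ≤ N * t} ≤ ENNReal.ofReal (Real.exp (-(N * klR t (P[X i0])))) := by
  set q : ℝ := P[X i0] with hq_def
  have hq0 : 0 < q := ht0.trans htq
  have h1q : (0:ℝ) < 1 - q := by linarith
  have h1t : (0:ℝ) < 1 - t := by linarith
  set lam : ℝ := Real.log (t * (1 - q) / (q * (1 - t))) with hlam_def
  have hr0 : (0:ℝ) < t * (1 - q) / (q * (1 - t)) := by positivity
  have hlam : lam ≤ 0 := by
    apply Real.log_nonpos hr0.le
    rw [div_le_one (by positivity)]
    nlinarith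
  have hexplam : Real.exp lam = t * (1 - q) / (q * (1 - t)) := Real.exp_log hr0
  -- integrability facts
  have hXint : ∀ n, Integrable (X n) P := fun n =>
    integrable_of_bddR 1 (hmeas n) (fun ω => by
      rw [Real.norm_eq_abs, abs_le]
      exact ⟨by linarith [(hrange n ω).1], (hrange n ω).2⟩)
  have hexpint : ∀ n, Integrable (fun ω => Real.exp (lam * X n ω)) P := fun n =>
    integrable_of_bddR 1 ((hmeas n).const_mul lam).exp (fun ω => by
      rw [Real.norm_eq_abs, abs_of_pos (Real.exp_pos _), ← Real.exp_zero]
      exact Real.exp_le_exp.2 (mul_nonpos_of_nonpos_of_nonneg hlam (hrange n ω).1))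
  set F : Ω → ℝ := ∑ n, X n with hF_def
  have hFmeas : Measurable F := by
    rw [hF_def]
    show Measurable fun ω => (∑ n, X n) ω
    simp only [Finset.sum_apply]
    exact Finset.measurable_sum _ (fun n _ => hmeas n)
  have hFint : Integrable (fun ω => Real.exp (lam * F ω)) P := by
    refine integrable_of_bddR 1 ((hFmeas.const_mul lam).exp) (fun ω => ?_)
    rw [Real.norm_eq_abs, abs_of_pos (Real.exp_pos _), ← Real.exp_zero]
    refine Real.exp_le_exp.2 (mul_nonpos_of_nonpos_of_nonneg hlam ?_)
    rw [hF_def, Finset.sum_apply]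
    exact Finset.sum_nonneg (fun n _ => (hrange n ω).1)
  have key := measure_le_le_exp_mul_mgf (μ := P) (X := F) (N * t) hlam hFint
  -- mgf of sum
  have hmgf_eq : mgf F P lam = (mgf (X i0) P lam) ^ N := by
    rw [hF_def, hindep.mgf_sum hmeas Finset.univ]
    have heach : ∀ n, mgf (X n) P lam = mgf (X i0) P lam := by
      intro n
      have hcomp : IdentDistrib (fun ω => Real.exp (lam * X n ω))
          (fun ω => Real.exp (lam * X i0 ω)) P P :=
        (hident n).comp ((measurable_id.const_mul lam).exp)
      simpa [mgf] using hcomp.integral_eq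
    rw [Finset.prod_congr rfl (fun n _ => heach n), Finset.prod_const, Finset.card_univ,
      Fintype.card_fin]
  -- mgf bound
  have hmgf_le : mgf (X i0) P lam ≤ (1 - q) / (1 - t) := by
    have hpt : ∀ ω, Real.exp (lam * X i0 ω) ≤ 1 - X i0 ω + X i0 ω * Real.exp lam := by
      intro ω
      obtain ⟨hx0, hx1⟩ := hrange i0 ω
      have hcvx := convexOn_exp.2 (Set.mem_univ (0:ℝ)) (Set.mem_univ lam)
        (by linarith : (0:ℝ) ≤ 1 - X i0 ω) hx0 (by ring)
      simpa [mul_comm] using hcvx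
    have hint2 : Integrable (fun ω => 1 - X i0 ω + X i0 ω * Real.exp lam) P :=
      ((integrable_const 1).sub (hXint i0)).add ((hXint i0).mul_const _)
    have : mgf (X i0) P lam ≤ ∫ ω, (1 - X i0 ω + X i0 ω * Real.exp lam) ∂P :=
      integral_mono (hexpint i0) hint2 hpt
    have heval : ∫ ω, (1 - X i0 ω + X i0 ω * Real.exp lam) ∂P = 1 - q + q * Real.exp lam := by
      have e1 : Integrable (fun ω => (1:ℝ) - X i0 ω) P := (integrable_const 1).sub (hXint i0)
      rw [integral_add e1 ((hXint i0).mul_const _),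
        integral_sub (integrable_const 1) (hXint i0), integral_mul_const, integral_const]
      simp [hq_def]
    rw [heval] at this
    have : 1 - q + q * Real.exp lam = (1 - q) / (1 - t) := by
      rw [hexplam]
      field_simp
      ring
    linarith [‹mgf (X i0) P lam ≤ 1 - q + q * Real.exp lam›]
  -- put together
  have hpow : mgf F P lam ≤ ((1 - q) / (1 - t)) ^ N := by
    rw [hmgf_eq]
    exact pow_le_pow_left₀ mgf_nonneg hmgf_le N
  have hfin : Real.exp (-lam * (N * t)) * ((1 - q) / (1 - t)) ^ N
      = Real.exp (-(N * klR t q)) := by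
    rw [show (1 - q) / (1 - t) = Real.exp (Real.log ((1 - q) / (1 - t))) from
      (Real.exp_log (by positivity)).symm, ← Real.exp_nat_mul, ← Real.exp_add]
    congr 1
    have hlameq : lam = Real.log t + Real.log (1 - q) - (Real.log q + Real.log (1 - t)) := by
      rw [hlam_def, Real.log_div (by positivity) (by positivity),
        Real.log_mul ht0.ne' h1q.ne', Real.log_mul hq0.ne' h1t.ne']
    rw [Real.log_div h1q.ne' h1t.ne', hlameq]
    unfold klR
    ring
  have htoReal : (P {ω | F ω ≤ N * t}).toReal ≤ Real.exp (-(N * klR t q)) := by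
    calc (P {ω | F ω ≤ N * t}).toReal
        ≤ Real.exp (-lam * (N * t)) * mgf F P lam := key
      _ ≤ Real.exp (-lam * (N * t)) * ((1 - q) / (1 - t)) ^ N := by
          exact mul_le_mul_of_nonneg_left hpow (Real.exp_pos _).le
      _ = Real.exp (-(N * klR t q)) := hfin
  have hset : {ω | ∑ n, X n ω ≤ N * t} = {ω | F ω ≤ N * t} := by
    ext ω; simp [hF_def, Finset.sum_apply]
  rw [hset]
  exact (ENNReal.le_ofReal_iff_toReal_le (measure_ne_top _ _) (Real.exp_pos _).le).2 htoReal

lemma klInvUp_conf {Ω : Type*} [MeasurableSpace Ω] (P : Measure Ω) [IsProbabilityMeasure P]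
    (N : ℕ) (hN : 0 < N) (X : Fin N → Ω → ℝ) (hmeas : ∀ n, Measurable (X n))
    (hrange : ∀ n ω, X n ω ∈ Set.Icc (0:ℝ) 1)
    (hindep : iIndepFun X P)
    (i0 : Fin N) (hident : ∀ n, IdentDistrib (X n) (X i0) P P)
    (ε : ℝ) (hε : 0 < ε) :
    P {ω | ¬ (P[X i0] ≤ klInvUp ((N:ℝ)⁻¹ * ∑ n, X n ω) ((ε : ℝ) : EReal))}
      ≤ ENNReal.ofReal (Real.exp (-(N * ε))) := by
  have hNR : (0:ℝ) < (N:ℝ) := Nat.cast_pos.2 hN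
  set q : ℝ := P[X i0] with hq_def
  have hXint : ∀ n, Integrable (X n) P := fun n =>
    integrable_of_bddR 1 (hmeas n) (fun ω => by
      rw [Real.norm_eq_abs, abs_le]
      exact ⟨by linarith [(hrange n ω).1], (hrange n ω).2⟩)
  have hq0 : 0 ≤ q := integral_nonneg (fun ω => (hrange i0 ω).1)
  have hq1 : q ≤ 1 := by
    have h := integral_mono (hXint i0) (integrable_const 1) (fun ω => (hrange i0 ω).2)
    simpa using h
  set avg : Ω → ℝ := fun ω => (N:ℝ)⁻¹ * ∑ n, X n ω with havg_def
  have havg : ∀ ω, avg ω ∈ Set.Icc (0:ℝ) 1 := by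
    intro ω
    have hs0 : (0:ℝ) ≤ ∑ n, X n ω := Finset.sum_nonneg (fun n _ => (hrange n ω).1)
    have hs1 : ∑ n, X n ω ≤ (N:ℝ) := by
      calc ∑ n, X n ω ≤ ∑ _n : Fin N, (1:ℝ) :=
            Finset.sum_le_sum (fun n _ => (hrange n ω).2)
        _ = (N:ℝ) := by simp
    constructor
    · positivity
    · rw [havg_def]
      calc (N:ℝ)⁻¹ * ∑ n, X n ω ≤ (N:ℝ)⁻¹ * (N:ℝ) :=
            mul_le_mul_of_nonneg_left hs1 (by positivity)
        _ = 1 := inv_mul_cancel₀ hNR.ne'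
  have hεE : (0:EReal) ≤ ((ε:ℝ):EReal) := by exact_mod_cast hε.le
  have hbddA : ∀ s : ℝ, BddAbove {p : ℝ | p ∈ Set.Icc (0:ℝ) 1 ∧ klBin s p ≤ ((ε:ℝ):EReal)} :=
    fun s => ⟨1, fun x hx => hx.1.2⟩
  have good1 : ∀ s : ℝ, s ∈ Set.Icc (0:ℝ) 1 → q ≤ s → q ≤ klInvUp s ((ε:ℝ):EReal) := by
    intro s hs hqs
    refine hqs.trans (le_csSup (hbddA s) ⟨hs, ?_⟩)
    rw [klBin_self]; exact hεE
  have good2 : ∀ s : ℝ, klBin s q ≤ ((ε:ℝ):EReal) → q ≤ klInvUp s ((ε:ℝ):EReal) :=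
    fun s h => le_csSup (hbddA s) ⟨⟨hq0, hq1⟩, h⟩
  rcases eq_or_lt_of_le hq0 with hqz | hq0pos
  · -- q = 0 : event is empty
    have hsub : {ω | ¬ (q ≤ klInvUp (avg ω) ((ε:ℝ):EReal))} ⊆ (∅ : Set Ω) := fun ω hω =>
      (hω (good1 _ (havg ω) (hqz ▸ (havg ω).1))).elim
    calc P _ ≤ P (∅ : Set Ω) := measure_mono hsub
      _ = 0 := measure_empty
      _ ≤ _ := zero_le
  rcases eq_or_lt_of_le hq1 with hqo | hq1lt
  · -- q = 1 : X n = 1 almost surely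
    have hae : ∀ n, ∀ᵐ ω ∂P, X n ω = 1 := by
      intro n
      have hEn : P[X n] = 1 := by rw [(hident n).integral_eq, ← hq_def, hqo]
      have h0 : ∫ ω, ((1:ℝ) - X n ω) ∂P = 0 := by
        rw [integral_sub (integrable_const 1) (hXint n), hEn]
        simp
      have hnn : (0:Ω → ℝ) ≤ fun ω => (1:ℝ) - X n ω := fun ω => by
        simp [sub_nonneg]; exact (hrange n ω).2
      have hzero := (integral_eq_zero_iff_of_nonneg hnn
        ((integrable_const 1).sub (hXint n))).1 h0
      filter_upwards [hzero] with ω hω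
      have : (1:ℝ) - X n ω = 0 := hω
      linarith
    have hae' : ∀ᵐ ω ∂P, ∀ n, X n ω = 1 := ae_all_iff.2 hae
    have hnull : P {ω | ¬ ∀ n, X n ω = 1} = 0 := ae_iff.1 hae'
    refine le_trans (le_trans (measure_mono ?_) hnull.le) (zero_le)
    intro ω hω
    simp only [Set.mem_setOf_eq]
    intro hall
    apply hω
    apply good1 _ (havg ω)
    have : avg ω = 1 := by
      rw [havg_def]
      simp only [hall]
      simp
      exact inv_mul_cancel₀ hNR.ne'
    rw [this, ← hqo]
  -- main case 0 < q < 1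
  by_cases hcase : klR 0 q ≤ ε
  · -- event empty
    have hsub : {ω | ¬ (q ≤ klInvUp (avg ω) ((ε:ℝ):EReal))} ⊆ (∅ : Set Ω) := by
      intro ω hω
      exfalso
      apply hω
      rcases le_or_gt q (avg ω) with h | h
      · exact good1 _ (havg ω) h
      · apply good2
        rw [klBin_coe (havg ω).1 hq0pos hq1lt]
        have hmono : klR (avg ω) q ≤ klR 0 q := klR_anti hq0pos hq1lt
          (Set.mem_Icc.2 ⟨le_refl 0, hq0pos.le⟩)
          (Set.mem_Icc.2 ⟨(havg ω).1, h.le⟩) (havg ω).1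
        exact_mod_cast le_trans hmono hcase
    calc P _ ≤ P (∅ : Set Ω) := measure_mono hsub
      _ = 0 := measure_empty
      _ ≤ _ := zero_le
  · push_neg at hcase
    obtain ⟨t, htmem, htval⟩ :=
      intermediate_value_Icc' hq0pos.le (continuous_klR q).continuousOn
        (Set.mem_Icc.2 ⟨by rw [klR_self]; exact hε.le, hcase.le⟩)
    replace htval : klR t q = ε := htval
    have ht0 : 0 < t := by
      rcases eq_or_lt_of_le htmem.1 with h | h
      · exfalso; rw [← h] at htval; rw [htval] at hcase; exact lt_irrefl _ hcase
      · exact h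
    have htq : t < q := by
      rcases eq_or_lt_of_le htmem.2 with h | h
      · exfalso; rw [h, klR_self] at htval; exact hε.ne' htval.symm
      · exact h
    have hchern := chernoff_low P N X hmeas hrange hindep i0 hident t ht0
      (by rw [← hq_def]; exact htq) (by rw [← hq_def]; exact hq1lt)
    rw [← hq_def, htval] at hchern
    refine le_trans (measure_mono ?_) hchern
    intro ω hω
    simp only [Set.mem_setOf_eq]
    by_contra hc
    push_neg at hc
    apply hω
    have htavg : t < avg ω := by
      rw [havg_def]
      have := mul_lt_mul_of_pos_left hc (show (0:ℝ) < (N:ℝ)⁻¹ by positivity)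
      rwa [← mul_assoc, inv_mul_cancel₀ hNR.ne', one_mul] at this
    rcases le_or_gt q (avg ω) with h | h
    · exact good1 _ (havg ω) h
    · apply good2
      rw [klBin_coe (havg ω).1 hq0pos hq1lt]
      have hmono : klR (avg ω) q ≤ klR t q := klR_anti hq0pos hq1lt
        (Set.mem_Icc.2 ⟨ht0.le, htq.le⟩) (Set.mem_Icc.2 ⟨(havg ω).1, h.le⟩) htavg.le
      rw [htval] at hmono
      exact_mod_cast hmono

/-- Split-kl inequality: for i.i.d. random variables `Z n` with values in `[a, b]`,
`a < μ₀ < b`, with `Z n = μ₀ + Zₙ⁺ − Zₙ⁻` where `Zₙ⁺ = max 0 (Z n − μ₀)` and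
`Zₙ⁻ = max 0 (μ₀ − Z n)`, mean `p = E[Z 0]` and empirical means `p̂⁺, p̂⁻`, for any
`δ ∈ (0,1)`, with probability at least `1 − δ`,
`p ≤ μ₀ + (b − μ₀)·kl⁻¹⁺(p̂⁺/(b − μ₀), ln(2/δ)/N) − (μ₀ − a)·kl⁻¹⁻(p̂⁻/(μ₀ − a), ln(2/δ)/N)`. -/
theorem split_kl_inequality
    {Ω : Type*} [MeasurableSpace Ω] (P : Measure Ω) [IsProbabilityMeasure P]
    (a μ₀ b : ℝ) (haμ : a < μ₀) (hμb : μ₀ < b)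
    (N : ℕ) (hN : 0 < N) (Z : Fin N → Ω → ℝ)
    (hmeas : ∀ n, Measurable (Z n))
    (hrange : ∀ n ω, Z n ω ∈ Set.Icc a b)
    (hindep : iIndepFun Z P)
    (hident : ∀ n, IdentDistrib (Z n) (Z ⟨0, hN⟩) P P)
    (δ : ℝ) (hδ : δ ∈ Set.Ioo (0 : ℝ) 1) :
    ENNReal.ofReal (1 - δ) ≤
      P {ω | P[Z ⟨0, hN⟩] ≤ μ₀
          + (b - μ₀) * klInvUp (((N : ℝ)⁻¹ * ∑ n, max 0 (Z n ω - μ₀)) / (b - μ₀))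
              ((Real.log (2 / δ) / (N : ℝ) : ℝ) : EReal)
          - (μ₀ - a) * klInvLow (((N : ℝ)⁻¹ * ∑ n, max 0 (μ₀ - Z n ω)) / (μ₀ - a))
              ((Real.log (2 / δ) / (N : ℝ) : ℝ) : EReal)} := by
  obtain ⟨hδ0, hδ1⟩ := hδ
  have hbμ : (0:ℝ) < b - μ₀ := by linarith
  have haμ2 : (0:ℝ) < μ₀ - a := by linarith
  have hNR : (0:ℝ) < (N:ℝ) := Nat.cast_pos.2 hN
  set i0 : Fin N := ⟨0, hN⟩ with hi0
  set ε : ℝ := Real.log (2 / δ) / (N:ℝ) with hε_def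
  have hε : 0 < ε := by
    apply div_pos _ hNR
    apply Real.log_pos
    rw [lt_div_iff₀ hδ0]; linarith
  have hεE : (0:EReal) ≤ ((ε:ℝ):EReal) := by exact_mod_cast hε.le
  set X : Fin N → Ω → ℝ := fun n ω => max 0 (Z n ω - μ₀) / (b - μ₀) with hX_def
  set V : Fin N → Ω → ℝ := fun n ω => max 0 (μ₀ - Z n ω) / (μ₀ - a) with hV_def
  set Y : Fin N → Ω → ℝ := fun n ω => 1 - max 0 (μ₀ - Z n ω) / (μ₀ - a) with hY_def
  have hfm : Measurable fun x : ℝ => max 0 (x - μ₀) / (b - μ₀) :=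
    (measurable_const.max (measurable_id.sub measurable_const)).div_const _
  have hvm : Measurable fun x : ℝ => max 0 (μ₀ - x) / (μ₀ - a) :=
    (measurable_const.max (measurable_const.sub measurable_id)).div_const _
  have hgm : Measurable fun x : ℝ => 1 - max 0 (μ₀ - x) / (μ₀ - a) :=
    measurable_const.sub hvm
  have hXmeas : ∀ n, Measurable (X n) := fun n => hfm.comp (hmeas n)
  have hVmeas : ∀ n, Measurable (V n) := fun n => hvm.comp (hmeas n)
  have hYmeas : ∀ n, Measurable (Y n) := fun n => hgm.comp (hmeas n)
  have hXrange : ∀ n ω, X n ω ∈ Set.Icc (0:ℝ) 1 := by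
    intro n ω
    constructor
    · have : (0:ℝ) ≤ max 0 (Z n ω - μ₀) := le_max_left _ _
      positivity
    · rw [hX_def]; simp only
      rw [div_le_one hbμ]
      exact max_le hbμ.le (by linarith [(hrange n ω).2])
  have hVrange : ∀ n ω, V n ω ∈ Set.Icc (0:ℝ) 1 := by
    intro n ω
    constructor
    · have : (0:ℝ) ≤ max 0 (μ₀ - Z n ω) := le_max_left _ _
      positivity
    · rw [hV_def]; simp only
      rw [div_le_one haμ2]
      exact max_le haμ2.le (by linarith [(hrange n ω).1])
  have hYrange : ∀ n ω, Y n ω ∈ Set.Icc (0:ℝ) 1 := by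
    intro n ω
    have h := hVrange n ω
    have hYe : Y n ω = 1 - V n ω := rfl
    rw [hYe]
    exact ⟨by linarith [h.2], by linarith [h.1]⟩
  have hXindep : iIndepFun X P :=
    hindep.comp (fun _ => fun x : ℝ => max 0 (x - μ₀) / (b - μ₀)) (fun _ => hfm)
  have hYindep : iIndepFun Y P :=
    hindep.comp (fun _ => fun x : ℝ => 1 - max 0 (μ₀ - x) / (μ₀ - a)) (fun _ => hgm)
  have hXident : ∀ n, IdentDistrib (X n) (X i0) P P := fun n => (hident n).comp hfm
  have hYident : ∀ n, IdentDistrib (Y n) (Y i0) P P := fun n => (hident n).comp hgm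
  have hconfX := klInvUp_conf P N hN X hXmeas hXrange hXindep i0 hXident ε hε
  have hconfY := klInvUp_conf P N hN Y hYmeas hYrange hYindep i0 hYident ε hε
  have hexpε : Real.exp (-((N:ℝ) * ε)) = δ / 2 := by
    rw [hε_def, show (N:ℝ) * (Real.log (2 / δ) / (N:ℝ)) = Real.log (2 / δ) by
      field_simp]
    rw [Real.exp_neg, Real.exp_log (by positivity), inv_div]
  rw [hexpε] at hconfX hconfY
  -- integrability
  have hXint0 : Integrable (X i0) P := integrable_of_bddR 1 (hXmeas i0) (fun ω => by
    rw [Real.norm_eq_abs, abs_le]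
    exact ⟨by linarith [(hXrange i0 ω).1], (hXrange i0 ω).2⟩)
  have hVint0 : Integrable (V i0) P := integrable_of_bddR 1 (hVmeas i0) (fun ω => by
    rw [Real.norm_eq_abs, abs_le]
    exact ⟨by linarith [(hVrange i0 ω).1], (hVrange i0 ω).2⟩)
  -- mean decomposition
  have hdecomp : P[Z i0] = μ₀ + (b - μ₀) * P[X i0] - (μ₀ - a) * P[V i0] := by
    have hpt : ∀ ω, Z i0 ω = μ₀ + (b - μ₀) * X i0 ω - (μ₀ - a) * V i0 ω := by
      intro ω
      rw [hX_def, hV_def]; simp only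
      have e1 : (b - μ₀) * (max 0 (Z i0 ω - μ₀) / (b - μ₀)) = max 0 (Z i0 ω - μ₀) := by
        field_simp
      have e2 : (μ₀ - a) * (max 0 (μ₀ - Z i0 ω) / (μ₀ - a)) = max 0 (μ₀ - Z i0 ω) := by
        field_simp
      rw [e1, e2]
      rcases le_total (Z i0 ω) μ₀ with h | h
      · rw [max_eq_left (by linarith : Z i0 ω - μ₀ ≤ 0),
          max_eq_right (by linarith : (0:ℝ) ≤ μ₀ - Z i0 ω)]
        ring
      · rw [max_eq_right (by linarith : (0:ℝ) ≤ Z i0 ω - μ₀),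
          max_eq_left (by linarith : μ₀ - Z i0 ω ≤ 0)]
        ring
    calc P[Z i0] = ∫ ω, (μ₀ + (b - μ₀) * X i0 ω - (μ₀ - a) * V i0 ω) ∂P :=
          integral_congr_ae (ae_of_all _ hpt)
      _ = μ₀ + (b - μ₀) * P[X i0] - (μ₀ - a) * P[V i0] := by
          have i2 : Integrable (fun ω => (μ₀ - a) * V i0 ω) P := hVint0.const_mul _
          have i3 : Integrable (fun ω => (b - μ₀) * X i0 ω) P := hXint0.const_mul _
          have i1 : Integrable (fun ω => μ₀ + (b - μ₀) * X i0 ω) P :=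
            (integrable_const μ₀).add i3
          rw [integral_sub i1 i2, integral_add (integrable_const μ₀) i3,
            integral_const_mul, integral_const_mul, integral_const]
          simp
  have hYV : P[Y i0] = 1 - P[V i0] := by
    have : P[Y i0] = ∫ ω, ((1:ℝ) - V i0 ω) ∂P := rfl
    rw [this, integral_sub (integrable_const 1) hVint0, integral_const]
    simp
  -- good event inclusion
  have hgood : ∀ ω : Ω,
      ω ∉ {ω | ¬ (P[X i0] ≤ klInvUp ((N:ℝ)⁻¹ * ∑ n, X n ω) ((ε : ℝ) : EReal))} →
      ω ∉ {ω | ¬ (P[Y i0] ≤ klInvUp ((N:ℝ)⁻¹ * ∑ n, Y n ω) ((ε : ℝ) : EReal))} →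
      P[Z i0] ≤ μ₀
          + (b - μ₀) * klInvUp (((N : ℝ)⁻¹ * ∑ n, max 0 (Z n ω - μ₀)) / (b - μ₀))
              ((ε : ℝ) : EReal)
          - (μ₀ - a) * klInvLow (((N : ℝ)⁻¹ * ∑ n, max 0 (μ₀ - Z n ω)) / (μ₀ - a))
              ((ε : ℝ) : EReal) := by
    intro ω h1 h2
    have h1' : P[X i0] ≤ klInvUp ((N:ℝ)⁻¹ * ∑ n, X n ω) ((ε : ℝ) : EReal) :=
      not_not.1 h1
    have h2' : P[Y i0] ≤ klInvUp ((N:ℝ)⁻¹ * ∑ n, Y n ω) ((ε : ℝ) : EReal) :=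
      not_not.1 h2
    have hsX : (N:ℝ)⁻¹ * ∑ n, X n ω
        = ((N:ℝ)⁻¹ * ∑ n, max 0 (Z n ω - μ₀)) / (b - μ₀) := by
      rw [hX_def]; simp only
      rw [← Finset.sum_div]; ring
    have hsV : (N:ℝ)⁻¹ * ∑ n, V n ω
        = ((N:ℝ)⁻¹ * ∑ n, max 0 (μ₀ - Z n ω)) / (μ₀ - a) := by
      rw [hV_def]; simp only
      rw [← Finset.sum_div]; ring
    have hsY : (N:ℝ)⁻¹ * ∑ n, Y n ω = 1 - (N:ℝ)⁻¹ * ∑ n, V n ω := by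
      rw [hY_def, hV_def]; simp only
      rw [Finset.sum_sub_distrib, Finset.sum_const, Finset.card_univ, Fintype.card_fin]
      field_simp
      rw [nsmul_eq_mul, mul_one]
    have hvmem : (N:ℝ)⁻¹ * ∑ n, V n ω ∈ Set.Icc (0:ℝ) 1 := by
      constructor
      · have : (0:ℝ) ≤ ∑ n, V n ω := Finset.sum_nonneg (fun n _ => (hVrange n ω).1)
        positivity
      · have hs1 : ∑ n, V n ω ≤ (N:ℝ) := by
          calc ∑ n, V n ω ≤ ∑ _n : Fin N, (1:ℝ) :=
                Finset.sum_le_sum (fun n _ => (hVrange n ω).2)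
            _ = (N:ℝ) := by simp
        calc (N:ℝ)⁻¹ * ∑ n, V n ω ≤ (N:ℝ)⁻¹ * (N:ℝ) :=
              mul_le_mul_of_nonneg_left hs1 (by positivity)
          _ = 1 := inv_mul_cancel₀ hNR.ne'
    have hrefl := klInvLow_reflect hvmem hεE
    have hlow : klInvLow ((N:ℝ)⁻¹ * ∑ n, V n ω) ((ε : ℝ) : EReal) ≤ P[V i0] := by
      rw [hrefl]
      have : 1 - P[V i0] ≤ klInvUp (1 - (N:ℝ)⁻¹ * ∑ n, V n ω) ((ε : ℝ) : EReal) := by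
        rw [← hsY, ← hYV]; exact h2'
      linarith
    rw [hsX] at h1'
    rw [hsV] at hlow
    have m1 := mul_le_mul_of_nonneg_left h1' hbμ.le
    have m2 := mul_le_mul_of_nonneg_left hlow haμ2.le
    rw [hdecomp]
    linarith
  -- assembly
  have hcover : (Set.univ : Set Ω) ⊆
      {ω | P[Z i0] ≤ μ₀
          + (b - μ₀) * klInvUp (((N : ℝ)⁻¹ * ∑ n, max 0 (Z n ω - μ₀)) / (b - μ₀))
              ((ε : ℝ) : EReal)
          - (μ₀ - a) * klInvLow (((N : ℝ)⁻¹ * ∑ n, max 0 (μ₀ - Z n ω)) / (μ₀ - a))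
              ((ε : ℝ) : EReal)}
      ∪ ({ω | ¬ (P[X i0] ≤ klInvUp ((N:ℝ)⁻¹ * ∑ n, X n ω) ((ε : ℝ) : EReal))}
        ∪ {ω | ¬ (P[Y i0] ≤ klInvUp ((N:ℝ)⁻¹ * ∑ n, Y n ω) ((ε : ℝ) : EReal))}) := by
    intro ω _
    by_cases h1 : P[X i0] ≤ klInvUp ((N:ℝ)⁻¹ * ∑ n, X n ω) ((ε : ℝ) : EReal)
    · by_cases h2 : P[Y i0] ≤ klInvUp ((N:ℝ)⁻¹ * ∑ n, Y n ω) ((ε : ℝ) : EReal)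
      · exact Or.inl (hgood ω (not_not_intro h1) (not_not_intro h2))
      · exact Or.inr (Or.inr h2)
    · exact Or.inr (Or.inl h1)
  have h1le : (1:ENNReal) ≤ P {ω | P[Z i0] ≤ μ₀
          + (b - μ₀) * klInvUp (((N : ℝ)⁻¹ * ∑ n, max 0 (Z n ω - μ₀)) / (b - μ₀))
              ((ε : ℝ) : EReal)
          - (μ₀ - a) * klInvLow (((N : ℝ)⁻¹ * ∑ n, max 0 (μ₀ - Z n ω)) / (μ₀ - a))
              ((ε : ℝ) : EReal)} + ENNReal.ofReal δ := by
    calc (1:ENNReal) = P Set.univ := measure_univ.symm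
      _ ≤ P (_ ∪ _) := measure_mono hcover
      _ ≤ P _ + P ({ω | ¬ (P[X i0] ≤ klInvUp ((N:ℝ)⁻¹ * ∑ n, X n ω) ((ε : ℝ) : EReal))}
            ∪ {ω | ¬ (P[Y i0] ≤ klInvUp ((N:ℝ)⁻¹ * ∑ n, Y n ω) ((ε : ℝ) : EReal))}) :=
          measure_union_le _ _
      _ ≤ P _ + (P {ω | ¬ (P[X i0] ≤ klInvUp ((N:ℝ)⁻¹ * ∑ n, X n ω) ((ε : ℝ) : EReal))}
            + P {ω | ¬ (P[Y i0] ≤ klInvUp ((N:ℝ)⁻¹ * ∑ n, Y n ω) ((ε : ℝ) : EReal))}) :=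
          add_le_add_right (measure_union_le _ _) _
      _ ≤ _ + (ENNReal.ofReal (δ/2) + ENNReal.ofReal (δ/2)) := by
          exact add_le_add_right (add_le_add hconfX hconfY) _
      _ = _ + ENNReal.ofReal δ := by
          rw [← ENNReal.ofReal_add (by positivity) (by positivity)]
          norm_num
  have hfinal : ENNReal.ofReal (1 - δ) + ENNReal.ofReal δ ≤
      P {ω | P[Z i0] ≤ μ₀
          + (b - μ₀) * klInvUp (((N : ℝ)⁻¹ * ∑ n, max 0 (Z n ω - μ₀)) / (b - μ₀))
              ((ε : ℝ) : EReal)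
          - (μ₀ - a) * klInvLow (((N : ℝ)⁻¹ * ∑ n, max 0 (μ₀ - Z n ω)) / (μ₀ - a))
              ((ε : ℝ) : EReal)} + ENNReal.ofReal δ := by
    refine le_trans ?_ h1le
    rw [← ENNReal.ofReal_add (by linarith) hδ0.le, show (1 - δ) + δ = 1 by ring]
    simp
  exact (ENNReal.add_le_add_iff_right ENNReal.ofReal_ne_top).1 hfinal
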